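/- Let A be an inductively connected line arrangement of n ≥ 4 lines such that A ∉ 𝔛(n) ∪ 𝔛̄(n). Then there exists an order ω on A such that τ_i(A,ω) ≤ 2 for all i ∈ {1,…,n} and the subarrangement A₄ = ω⁻¹({1,2,3,4}) is generic, i.e. no three of its four lines are concurrent. -/

import Mathlib

noncomputable section
attribute [local instance] Classical.propDecidable

/-- The projective plane: points of `ℙ(ℂ³)`.  A "line" of `ℂP²` with equation
`a x + b y + c z = 0` is identified with the point `(a : b : c)` of the dual plane. -/
abbrev ProjPlane := Projectivization ℂ (Fin 3 → ℂ)

/-- The line `l = (a : b : c)` passes through the point `q = (x : y : z)`,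
i.e. `a x + b y + c z = 0` (well defined on representatives). -/
def incident (l q : ProjPlane) : Prop := ∑ t : Fin 3, l.rep t * q.rep t = 0

/-- The set of indices of lines of the arrangement `A` passing through `q`. -/
def pointSet {ι : Type} [Fintype ι] [DecidableEq ι] (A : ι → ProjPlane) (q : ProjPlane) :
    Finset ι :=
  Finset.univ.filter fun i => incident (A i) q

/-- The combinatorics of the arrangement `A`: the collection of the sets `P(q)` of lines
through `q`, for the points `q` lying on at least two lines (the singular points). -/
def combinatorics {ι : Type} [Fintype ι] [DecidableEq ι] (A : ι → ProjPlane) :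
    Finset (Finset ι) :=
  Finset.univ.filter fun P => 2 ≤ P.card ∧ ∃ q, P = pointSet A q

/-- `τ_i(A, ω)`: the number of singular points of the subarrangement formed by the lines
placed before position `i` that lie on the line placed at position `i` (positions are
`0`-based, given by the order `ω`). -/
def tauArr {ι : Type} [Fintype ι] [DecidableEq ι] (A : ι → ProjPlane) {N : ℕ}
    (ω : ι ≃ Fin N) (i : Fin N) : ℕ :=
  ((combinatorics A).filter fun P =>
    ω.symm i ∈ P ∧ 2 ≤ (P.filter fun j => ω j < i).card).card

/-- `A ∈ 𝔛(n)`: all lines pass through a common point. -/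
def IsPencil {n : ℕ} (A : Fin n → ProjPlane) : Prop := ∃ q, ∀ i, incident (A i) q

/-- `A ∈ 𝔛̄(n)`: exactly `n - 1` of the lines pass through a common point. -/
def IsNearPencil {n : ℕ} (A : Fin n → ProjPlane) : Prop :=
  ∃ q, (Finset.univ.filter fun i => incident (A i) q).card = n - 1


set_option maxHeartbeats 1600000

namespace St3

open Finset Module

def dot (v w : Fin 3 → ℂ) : ℂ := ∑ t : Fin 3, v t * w t

lemma incident_iff (l q : ProjPlane) : incident l q ↔ dot l.rep q.rep = 0 := Iff.rfl

lemma ker_mem (a b v : Fin 3 → ℂ) :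
    v ∈ LinearMap.ker (Matrix.of ![a,b]).mulVecLin ↔ dot a v = 0 ∧ dot b v = 0 := by
  simp [LinearMap.mem_ker, Matrix.mulVecLin_apply, Matrix.mulVec, funext_iff,
    Fin.forall_fin_two, dot, dotProduct]

lemma finrank_ker_pos (a b : Fin 3 → ℂ) :
    0 < finrank ℂ (LinearMap.ker (Matrix.of ![a,b]).mulVecLin) := by
  have h := LinearMap.finrank_range_add_finrank_ker (Matrix.of ![a,b]).mulVecLin
  have h2 : (Matrix.of ![a,b] : Matrix (Fin 2) (Fin 3) ℂ).rank ≤ 2 := by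
    simpa using Matrix.rank_le_card_height (Matrix.of ![a,b])
  have h3 : finrank ℂ (Fin 3 → ℂ) = 3 := by simp
  rw [h3] at h
  have : finrank ℂ (LinearMap.range (Matrix.of ![a,b]).mulVecLin)
      = (Matrix.of ![a,b] : Matrix (Fin 2) (Fin 3) ℂ).rank := rfl
  omega

lemma finrank_ker_le (a b : Fin 3 → ℂ) (hind : LinearIndependent ℂ ![a,b]) :
    finrank ℂ (LinearMap.ker (Matrix.of ![a,b]).mulVecLin) ≤ 1 := by
  have h := LinearMap.finrank_range_add_finrank_ker (Matrix.of ![a,b]).mulVecLin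
  have h2 : (Matrix.of ![a,b] : Matrix (Fin 2) (Fin 3) ℂ).rank = 2 := by
    simpa using hind.rank_matrix (M := Matrix.of ![a,b])
  have h3 : finrank ℂ (Fin 3 → ℂ) = 3 := by simp
  rw [h3] at h
  have : finrank ℂ (LinearMap.range (Matrix.of ![a,b]).mulVecLin)
      = (Matrix.of ![a,b] : Matrix (Fin 2) (Fin 3) ℂ).rank := rfl
  omega

lemma exists_common (l₁ l₂ : ProjPlane) : ∃ q, incident l₁ q ∧ incident l₂ q := by
  have hne : LinearMap.ker (Matrix.of ![l₁.rep, l₂.rep]).mulVecLin ≠ ⊥ := by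
    intro hbot
    have := finrank_ker_pos l₁.rep l₂.rep
    rw [hbot, finrank_bot] at this
    omega
  obtain ⟨v, hv, hv0⟩ := (Submodule.ne_bot_iff _).mp hne
  rw [ker_mem] at hv
  refine ⟨Projectivization.mk ℂ v hv0, ?_, ?_⟩ <;>
  · rw [incident_iff]
    obtain ⟨c, hc⟩ := (Projectivization.mk_eq_mk_iff ℂ _ v
      (Projectivization.rep_nonzero _) hv0).mp (Projectivization.mk_rep _)
    rw [← hc]
    have expand : ∀ w : Fin 3 → ℂ, dot w ((c : ℂ) • v) = (c : ℂ) * dot w v := by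
      intro w
      simp only [dot, Pi.smul_apply, smul_eq_mul, Finset.mul_sum]
      exact Finset.sum_congr rfl fun t _ => by ring
    rw [Units.smul_def, expand]
    first
    | rw [hv.1, mul_zero]
    | rw [hv.2, mul_zero]

lemma indep_of_ne {l₁ l₂ : ProjPlane} (h : l₁ ≠ l₂) : LinearIndependent ℂ ![l₁.rep, l₂.rep] := by
  by_contra hdep
  rw [LinearIndependent.pair_iff' (Projectivization.rep_nonzero l₁)] at hdep
  push_neg at hdep
  obtain ⟨c, hc⟩ := hdep
  apply h
  have hcne : c ≠ 0 := by
    rintro rfl; rw [zero_smul] at hc; exact Projectivization.rep_nonzero l₂ hc.symm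
  conv_lhs => rw [← Projectivization.mk_rep l₁]
  conv_rhs => rw [← Projectivization.mk_rep l₂]
  rw [Projectivization.mk_eq_mk_iff']
  exact ⟨c⁻¹, by rw [← hc, smul_smul, inv_mul_cancel₀ hcne, one_smul]⟩

lemma common_unique {l₁ l₂ q₁ q₂ : ProjPlane} (h : l₁ ≠ l₂)
    (h11 : incident l₁ q₁) (h21 : incident l₂ q₁)
    (h12 : incident l₁ q₂) (h22 : incident l₂ q₂) : q₁ = q₂ := by
  have hind := indep_of_ne h
  have hfr := finrank_ker_le l₁.rep l₂.rep hind
  set K := LinearMap.ker (Matrix.of ![l₁.rep, l₂.rep]).mulVecLin with hK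
  have hv : q₁.rep ∈ K := (ker_mem _ _ _).mpr ⟨h11, h21⟩
  have hw : q₂.rep ∈ K := (ker_mem _ _ _).mpr ⟨h12, h22⟩
  have h1 : finrank ℂ K = 1 := le_antisymm hfr (finrank_ker_pos _ _)
  have hsp : Submodule.span ℂ {(⟨q₁.rep, hv⟩ : K)} = ⊤ := by
    apply (finrank_eq_one_iff_of_nonzero (⟨q₁.rep, hv⟩ : K) ?_).mp h1
    · exact fun hc => Projectivization.rep_nonzero q₁ (by simpa using congrArg Subtype.val hc)
  have : (⟨q₂.rep, hw⟩ : K) ∈ Submodule.span ℂ {(⟨q₁.rep, hv⟩ : K)} := hsp ▸ Submodule.mem_top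
  obtain ⟨c, hc⟩ := Submodule.mem_span_singleton.mp this
  have hc' : c • q₁.rep = q₂.rep := congrArg Subtype.val hc
  have hcne : c ≠ 0 := by
    rintro rfl; simp at hc'; exact Projectivization.rep_nonzero q₂ hc'.symm
  conv_lhs => rw [← Projectivization.mk_rep q₁]
  conv_rhs => rw [← Projectivization.mk_rep q₂]
  rw [Projectivization.mk_eq_mk_iff']
  exact ⟨c⁻¹, by rw [← hc', smul_smul, inv_mul_cancel₀ hcne, one_smul]⟩


variable {n : ℕ} {A : Fin n → ProjPlane}

/-- `S` is in "generic position": no point lies on 3 of its lines. -/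
def Gen (A : Fin n → ProjPlane) (S : Finset (Fin n)) : Prop :=
  ∀ q, (S.filter fun i => incident (A i) q).card ≤ 2

lemma lemL (hA : Function.Injective A) (S : Finset (Fin n)) :
    4 ≤ S.card → (∀ Q ⊆ S, Q.card = 4 → ¬ Gen A Q) →
    ∃ p, (S.filter fun i => ¬ incident (A i) p).card ≤ 1 := by
  induction S using Finset.strongInduction with
  | _ S ih =>
    intro h4 hng
    by_cases hc : S.card = 4
    · obtain ⟨q, hq⟩ : ∃ q, ¬ (S.filter fun i => incident (A i) q).card ≤ 2 := by
        have := hng S Finset.Subset.rfl hc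
        unfold Gen at this; push_neg at this; obtain ⟨q, hq⟩ := this
        exact ⟨q, by omega⟩
      refine ⟨q, ?_⟩
      have hsum := Finset.card_filter_add_card_filter_not
        (s := S) (p := fun i => incident (A i) q)
      omega
    · -- card ≥ 5
      have h5 : 5 ≤ S.card := by omega
      obtain ⟨g, hg⟩ := Finset.card_pos.mp (by omega : 0 < S.card)
      set S' := S.erase g with hS'
      have hss : S' ⊂ S := Finset.erase_ssubset hg
      have hcard' : S'.card = S.card - 1 := Finset.card_erase_of_mem hg
      obtain ⟨p, hp1⟩ := ih S' hss (by omega)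
        (fun Q hQ h4Q => hng Q (hQ.trans (Finset.erase_subset _ _)) h4Q)
      by_cases hgp : incident (A g) p
      · refine ⟨p, ?_⟩
        have hins : S = insert g S' := (Finset.insert_erase hg).symm
        rw [hins, Finset.filter_insert, if_neg (not_not_intro hgp)]
        exact hp1
      · refine ⟨p, ?_⟩
        suffices hS'e : S'.filter (fun i => ¬ incident (A i) p) = ∅ by
          have hins : S = insert g S' := (Finset.insert_erase hg).symm
          rw [hins, Finset.filter_insert, if_pos hgp, hS'e]
          simp
        by_contra hne
        obtain ⟨h, hh⟩ := Finset.nonempty_iff_ne_empty.mpr hne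
        rw [Finset.mem_filter] at hh
        obtain ⟨hhS', hhp⟩ := hh
        have hgh : g ≠ h := fun e => (Finset.ne_of_mem_erase hhS') e.symm
        obtain ⟨q, hgq, hhq⟩ := exists_common (A g) (A h)
        set T := S'.filter (fun i => incident (A i) p) with hT
        have hTcard : 3 ≤ T.card := by
          rw [hT]
          have hsum := Finset.card_filter_add_card_filter_not
            (s := S') (p := fun i => incident (A i) p)
          omega
        have hclaim : (T.filter fun i => ¬ incident (A i) q).card ≤ 1 := by
          by_contra hcl
          obtain ⟨x, hx, y, hy, hxy⟩ := Finset.one_lt_card.mp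
            (show 1 < ((T.filter fun i => ¬ incident (A i) q)).card by omega)
          simp only [hT, Finset.mem_filter] at hx hy
          obtain ⟨⟨hxS', hxp⟩, hxq⟩ := hx
          obtain ⟨⟨hyS', hyp⟩, hyq⟩ := hy
          -- build the quadruple
          have hxg : x ≠ g := Finset.ne_of_mem_erase hxS'
          have hyg : y ≠ g := Finset.ne_of_mem_erase hyS'
          have hxh : x ≠ h := fun e => hhp (e ▸ hxp)
          have hyh : y ≠ h := fun e => hhp (e ▸ hyp)
          set Q : Finset (Fin n) := insert x (insert y (insert g {h})) with hQdef
          have hQ4 : Q.card = 4 := by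
            rw [hQdef]
            rw [Finset.card_insert_of_notMem (by simp [hxy, hxg, hxh]),
              Finset.card_insert_of_notMem (by simp [hyg, hyh]),
              Finset.card_insert_of_notMem (by simp [hgh]), Finset.card_singleton]
          have hQS : Q ⊆ S := by
            intro i hi
            rw [hQdef] at hi
            simp only [Finset.mem_insert, Finset.mem_singleton] at hi
            rcases hi with rfl | rfl | rfl | rfl
            · exact Finset.mem_of_mem_erase hxS'
            · exact Finset.mem_of_mem_erase hyS'
            · exact hg
            · exact Finset.mem_of_mem_erase hhS'
          have hngQ := hng Q hQS hQ4
          unfold Gen at hngQ; push_neg at hngQ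
          obtain ⟨r, hr⟩ := hngQ
          have hr3 : 3 ≤ (Q.filter fun i => incident (A i) r).card := by omega
          have hfail : (Q.filter fun i => ¬ incident (A i) r).card ≤ 1 := by
            have hsum := Finset.card_filter_add_card_filter_not
              (s := Q) (p := fun i => incident (A i) r)
            omega
          have hmemQ : ∀ i, i ∈ Q ↔ i = x ∨ i = y ∨ i = g ∨ i = h := by
            intro i; rw [hQdef]; simp
          by_cases hxr : incident (A x) r
          · by_cases hyr : incident (A y) r
            · have hpr : p = r :=
                common_unique (hA.ne hxy) hxp hyp hxr hyr
              have : incident (A g) r ∨ incident (A h) r := by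
                by_contra hb
                push_neg at hb
                have hsub : (Q.filter fun i => incident (A i) r) ⊆ {x, y} := by
                  intro i hi
                  rw [Finset.mem_filter] at hi
                  rcases (hmemQ i).mp hi.1 with rfl | rfl | rfl | rfl
                  · simp
                  · simp
                  · exact absurd hi.2 hb.1
                  · exact absurd hi.2 hb.2
                have := Finset.card_le_card hsub
                have : ({x, y} : Finset (Fin n)).card ≤ 2 := Finset.card_insert_le _ _ |>.trans (by simp)
                omega
              rcases this with hgr | hhr
              · exact hgp (hpr ▸ hgr)
              · exact hhp (hpr ▸ hhr)
            · -- y fails r, so x, g, h all incident to r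
              have hgr : incident (A g) r ∧ incident (A h) r := by
                by_contra hb
                rcases not_and_or.mp hb with hbg | hbh
                · have hsub : ({y, g} : Finset (Fin n)) ⊆ Q.filter fun i => ¬ incident (A i) r := by
                    intro i hi
                    simp only [Finset.mem_insert, Finset.mem_singleton] at hi
                    rcases hi with rfl | rfl
                    · exact Finset.mem_filter.mpr ⟨(hmemQ _).mpr (Or.inr (Or.inl rfl)), hyr⟩
                    · exact Finset.mem_filter.mpr ⟨(hmemQ _).mpr (Or.inr (Or.inr (Or.inl rfl))), hbg⟩
                  have hc2 : ({y, g} : Finset (Fin n)).card = 2 :=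
                    Finset.card_pair hyg
                  have := Finset.card_le_card hsub
                  omega
                · have hsub : ({y, h} : Finset (Fin n)) ⊆ Q.filter fun i => ¬ incident (A i) r := by
                    intro i hi
                    simp only [Finset.mem_insert, Finset.mem_singleton] at hi
                    rcases hi with rfl | rfl
                    · exact Finset.mem_filter.mpr ⟨(hmemQ _).mpr (Or.inr (Or.inl rfl)), hyr⟩
                    · exact Finset.mem_filter.mpr ⟨(hmemQ _).mpr (Or.inr (Or.inr (Or.inr rfl))), hbh⟩
                  have hc2 : ({y, h} : Finset (Fin n)).card = 2 :=
                    Finset.card_pair hyh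
                  have := Finset.card_le_card hsub
                  omega
              have hqr : q = r := common_unique (hA.ne hgh) hgq hhq hgr.1 hgr.2
              exact hxq (hqr ▸ hxr)
          · -- x fails r, so y, g, h all incident to r
            have hgr : incident (A g) r ∧ incident (A h) r := by
              by_contra hb
              rcases not_and_or.mp hb with hbg | hbh
              · have hsub : ({x, g} : Finset (Fin n)) ⊆ Q.filter fun i => ¬ incident (A i) r := by
                  intro i hi
                  simp only [Finset.mem_insert, Finset.mem_singleton] at hi
                  rcases hi with rfl | rfl
                  · exact Finset.mem_filter.mpr ⟨(hmemQ _).mpr (Or.inl rfl), hxr⟩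
                  · exact Finset.mem_filter.mpr ⟨(hmemQ _).mpr (Or.inr (Or.inr (Or.inl rfl))), hbg⟩
                have hc2 : ({x, g} : Finset (Fin n)).card = 2 := Finset.card_pair hxg
                have := Finset.card_le_card hsub
                omega
              · have hsub : ({x, h} : Finset (Fin n)) ⊆ Q.filter fun i => ¬ incident (A i) r := by
                  intro i hi
                  simp only [Finset.mem_insert, Finset.mem_singleton] at hi
                  rcases hi with rfl | rfl
                  · exact Finset.mem_filter.mpr ⟨(hmemQ _).mpr (Or.inl rfl), hxr⟩
                  · exact Finset.mem_filter.mpr ⟨(hmemQ _).mpr (Or.inr (Or.inr (Or.inr rfl))), hbh⟩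
                have hc2 : ({x, h} : Finset (Fin n)).card = 2 := Finset.card_pair hxh
                have := Finset.card_le_card hsub
                omega
            have hyr : incident (A y) r := by
              by_contra hbyr
              have hsub : ({x, y} : Finset (Fin n)) ⊆ Q.filter fun i => ¬ incident (A i) r := by
                intro i hi
                simp only [Finset.mem_insert, Finset.mem_singleton] at hi
                rcases hi with rfl | rfl
                · exact Finset.mem_filter.mpr ⟨(hmemQ _).mpr (Or.inl rfl), hxr⟩
                · exact Finset.mem_filter.mpr ⟨(hmemQ _).mpr (Or.inr (Or.inl rfl)), hbyr⟩
              have hc2 : ({x, y} : Finset (Fin n)).card = 2 := Finset.card_pair hxy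
              have := Finset.card_le_card hsub
              omega
            have hqr : q = r := common_unique (hA.ne hgh) hgq hhq hgr.1 hgr.2
            exact hyq (hqr ▸ hyr)
        -- now ≥ 2 lines of T through q
        have hTq : 2 ≤ (T.filter fun i => incident (A i) q).card := by
          have hsum := Finset.card_filter_add_card_filter_not
            (s := T) (p := fun i => incident (A i) q)
          omega
        obtain ⟨x, hx, y, hy, hxy⟩ := Finset.one_lt_card.mp
          (show 1 < ((T.filter fun i => incident (A i) q)).card by omega)
        simp only [hT, Finset.mem_filter] at hx hy
        have hpq : p = q := common_unique (hA.ne hxy) hx.1.2 hy.1.2 hx.2 hy.2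
        exact hgp (hpq ▸ hgq)


lemma mem_pointSet {i : Fin n} {q : ProjPlane} : i ∈ pointSet A q ↔ incident (A i) q := by
  simp [pointSet]

lemma exists_genquad (hn : 4 ≤ n) (hA : Function.Injective A)
    (hX : ¬ IsPencil A) (hXb : ¬ IsNearPencil A) :
    ∃ Q : Finset (Fin n), Q.card = 4 ∧ Gen A Q := by
  by_contra hng
  push_neg at hng
  obtain ⟨p, hp⟩ := lemL hA Finset.univ
    (by simpa using hn) (fun Q _ h4 => hng Q h4)
  have hsum := Finset.card_filter_add_card_filter_not
    (s := (univ : Finset (Fin n))) (p := fun i => incident (A i) p)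
  rw [Finset.card_univ, Fintype.card_fin] at hsum
  rcases Nat.le_one_iff_eq_zero_or_eq_one.mp hp with h0 | h1
  · apply hX
    refine ⟨p, fun i => ?_⟩
    by_contra hni
    have : i ∈ univ.filter fun i => ¬ incident (A i) p := by simp [hni]
    rw [Finset.card_eq_zero.mp h0] at this
    exact absurd this (Finset.notMem_empty i)
  · exact hXb ⟨p, by omega⟩

lemma card_filter_fin_lt (t : ℕ) (ht : t ≤ n) :
    (Finset.univ.filter fun i : Fin n => i.val < t).card = t := by
  have he : (Finset.univ.filter fun i : Fin n => i.val < t)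
      = (Finset.univ : Finset (Fin t)).map (Fin.castLEEmb ht) := by
    ext i
    constructor
    · intro hi
      rw [Finset.mem_filter] at hi
      exact Finset.mem_map.mpr ⟨⟨i.val, hi.2⟩, Finset.mem_univ _, rfl⟩
    · intro hi
      obtain ⟨j, -, rfl⟩ := Finset.mem_map.mp hi
      exact Finset.mem_filter.mpr ⟨Finset.mem_univ _, j.isLt⟩
  rw [he, Finset.card_map, Finset.card_univ, Fintype.card_fin]

lemma card_pos_prefix (ω : Fin n ≃ Fin n) (m : ℕ) :
    (Finset.univ.filter fun j : Fin n => (ω j).val < m).card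
      = (Finset.univ.filter fun i : Fin n => i.val < m).card := by
  apply Finset.card_bij (fun j _ => ω j)
  · intro a ha
    simp only [Finset.mem_filter, Finset.mem_univ, true_and] at ha ⊢
    exact ha
  · intro a _ b _ hab
    exact ω.injective hab
  · intro b hb
    refine ⟨ω.symm b, ?_, by simp⟩
    simp only [Finset.mem_filter, Finset.mem_univ, true_and] at hb ⊢
    simpa using hb

lemma tau_congr (ω ω' : Fin n ≃ Fin n) (i : Fin n) (h1 : ω.symm i = ω'.symm i)
    (h2 : ∀ j, ω j < i ↔ ω' j < i) : tauArr A ω i = tauArr A ω' i := by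
  unfold tauArr
  congr 1
  apply Finset.filter_congr
  intro P _
  rw [h1]
  have hf : (P.filter fun j => ω j < i) = P.filter fun j => ω' j < i :=
    Finset.filter_congr fun j _ => h2 j
  rw [hf]

lemma tau_lt4 (ω : Fin n ≃ Fin n)
    (hGen : ∀ q : ProjPlane,
      (Finset.univ.filter fun j : Fin n => (ω j).val < 4 ∧ incident (A j) q).card ≤ 2)
    (i : Fin n) (hi : i.val < 4) : tauArr A ω i ≤ 2 := by
  unfold tauArr
  have he : ((combinatorics A).filter fun P =>
      ω.symm i ∈ P ∧ 2 ≤ (P.filter fun j => ω j < i).card) = ∅ := by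
    rw [Finset.eq_empty_iff_forall_notMem]
    intro P hP
    rw [Finset.mem_filter] at hP
    obtain ⟨hPcomb, hzP, h2⟩ := hP
    obtain ⟨q, rfl⟩ : ∃ q, P = pointSet A q := by
      have := hPcomb
      simp only [combinatorics, Finset.mem_filter, Finset.mem_univ, true_and] at this
      exact this.2
    obtain ⟨j₁, hj₁, j₂, hj₂, hj12⟩ := Finset.one_lt_card.mp
      (lt_of_lt_of_le one_lt_two h2)
    rw [Finset.mem_filter] at hj₁ hj₂
    set z := ω.symm i with hz
    have hzpos : ω z = i := ω.apply_symm_apply i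
    have hsub : ({z, j₁, j₂} : Finset (Fin n)) ⊆
        Finset.univ.filter fun j => (ω j).val < 4 ∧ incident (A j) q := by
      intro j hj
      simp only [Finset.mem_insert, Finset.mem_singleton] at hj
      rw [Finset.mem_filter]
      rcases hj with rfl | rfl | rfl
      · exact ⟨Finset.mem_univ _, by rw [hzpos]; exact hi, mem_pointSet.mp hzP⟩
      · exact ⟨Finset.mem_univ _, lt_trans hj₁.2 (by simpa [Fin.lt_def] using hi),
          mem_pointSet.mp hj₁.1⟩
      · exact ⟨Finset.mem_univ _, lt_trans hj₂.2 (by simpa [Fin.lt_def] using hi),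
          mem_pointSet.mp hj₂.1⟩
    have hzj1 : z ≠ j₁ := by
      rintro rfl
      rw [hzpos] at hj₁
      exact lt_irrefl i hj₁.2
    have hzj2 : z ≠ j₂ := by
      rintro rfl
      rw [hzpos] at hj₂
      exact lt_irrefl i hj₂.2
    have hc3 : ({z, j₁, j₂} : Finset (Fin n)).card = 3 := by
      rw [Finset.card_insert_of_notMem (by simp [hzj1, hzj2]),
        Finset.card_insert_of_notMem (by simp [hj12]), Finset.card_singleton]
    have := Finset.card_le_card hsub
    have := hGen q
    omega
  rw [he]
  simp

lemma exists_perm_finset {β : Type} [Fintype β] [DecidableEq β] {s t : Finset β}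
    (h : s.card = t.card) : ∃ π : Equiv.Perm β, ∀ a, π a ∈ t ↔ a ∈ s := by
  classical
  have hcomp : sᶜ.card = tᶜ.card := by rw [Finset.card_compl, Finset.card_compl, h]
  let e₁ : {a // a ∈ s} ≃ {a // a ∈ t} := Finset.equivOfCardEq h
  let e₂ : {a // a ∈ sᶜ} ≃ {a // a ∈ tᶜ} := Finset.equivOfCardEq hcomp
  let es : {a // ¬ a ∈ s} ≃ {a // a ∈ sᶜ} :=
    Equiv.subtypeEquivRight fun a => (Finset.mem_compl).symm
  let et : {a // a ∈ tᶜ} ≃ {a // ¬ a ∈ t} :=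
    Equiv.subtypeEquivRight fun a => Finset.mem_compl
  let π : Equiv.Perm β :=
    ((Equiv.sumCompl (· ∈ s)).symm.trans
      ((Equiv.sumCongr e₁ (es.trans (e₂.trans et))).trans
        (Equiv.sumCompl (· ∈ t))))
  refine ⟨π, fun a => ?_⟩
  by_cases ha : a ∈ s
  · have h1 : (Equiv.sumCompl (· ∈ s)).symm a = Sum.inl ⟨a, ha⟩ :=
      Equiv.sumCompl_symm_apply_of_pos ha
    have : π a = (e₁ ⟨a, ha⟩ : {a // a ∈ t}).val := by
      simp only [π, Equiv.trans_apply, h1, Equiv.sumCongr_apply, Sum.map_inl,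
        Equiv.sumCompl_apply_inl]
    rw [this]
    simp [ha, (e₁ ⟨a, ha⟩).2]
  · have h1 : (Equiv.sumCompl (· ∈ s)).symm a = Sum.inr ⟨a, ha⟩ :=
      Equiv.sumCompl_symm_apply_of_neg ha
    have : π a = ((es.trans (e₂.trans et)) ⟨a, ha⟩ : {a // ¬ a ∈ t}).val := by
      simp only [π, Equiv.trans_apply, h1, Equiv.sumCongr_apply, Sum.map_inr,
        Equiv.sumCompl_apply_inr]
    rw [this]
    have h2 := ((es.trans (e₂.trans et)) ⟨a, ha⟩).2
    exact ⟨fun hm => absurd hm h2, fun hm => absurd hm ha⟩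


end St3

open Finset

/-- An inductively connected arrangement of `n ≥ 4` lines not in
`𝔛(n) ∪ 𝔛̄(n)` admits an order `ω` with `τ_i ≤ 2` for all `i` such that the first four
lines (in the order `ω`) are in generic position (no three concurrent). -/
theorem statement3 {n : ℕ} (hn : 4 ≤ n) (A : Fin n → ProjPlane)
    (hA : Function.Injective A)
    (hic : ∃ ω : Fin n ≃ Fin n, ∀ i, tauArr A ω i ≤ 2)
    (hX : ¬ IsPencil A) (hXb : ¬ IsNearPencil A) :
    ∃ ω : Fin n ≃ Fin n, (∀ i, tauArr A ω i ≤ 2) ∧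
      ∀ q : ProjPlane,
        (Finset.univ.filter fun i : Fin n => (ω i).val < 4 ∧ incident (A i) q).card ≤ 2 := by
  obtain ⟨ω, hτ⟩ := hic
  obtain ⟨Q0, hQ04, hQ0gen⟩ := St3.exists_genquad hn hA hX hXb
  have hex : ∃ m : ℕ, ∃ Q : Finset (Fin n),
      Q ⊆ (Finset.univ.filter fun j => (ω j).val ≤ m) ∧ Q.card = 4 ∧ St3.Gen A Q := by
    refine ⟨n - 1, Q0, ?_, hQ04, hQ0gen⟩
    intro j _
    simp only [Finset.mem_filter, Finset.mem_univ, true_and]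
    have := (ω j).isLt
    omega
  set k := Nat.find hex with hk
  obtain ⟨Q, hQsub, hQ4, hQgen⟩ := Nat.find_spec hex
  have hkle : k ≤ n - 1 := Nat.find_le (by
    refine ⟨Q0, ?_, hQ04, hQ0gen⟩
    intro j _
    simp only [Finset.mem_filter, Finset.mem_univ, true_and]
    have := (ω j).isLt
    omega)
  have hkn : k < n := by omega
  by_cases hk3 : k ≤ 3
  · -- the first four lines of ω are already generic
    have hQsub3 : Q ⊆ Finset.univ.filter fun j : Fin n => (ω j).val < 4 := by
      intro j hj
      have := hQsub hj
      simp only [Finset.mem_filter, Finset.mem_univ, true_and] at this ⊢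
      omega
    have hcard4 : (Finset.univ.filter fun j : Fin n => (ω j).val < 4).card = 4 := by
      rw [St3.card_pos_prefix ω 4, St3.card_filter_fin_lt 4 hn]
    have hQeq : Q = Finset.univ.filter fun j : Fin n => (ω j).val < 4 :=
      Finset.eq_of_subset_of_card_le hQsub3 (by rw [hcard4, hQ4])
    refine ⟨ω, hτ, fun q => ?_⟩
    have heq2 : (Finset.univ.filter fun i : Fin n => (ω i).val < 4 ∧ incident (A i) q)
        = Q.filter fun i => incident (A i) q := by
      rw [hQeq]
      ext j
      simp only [Finset.mem_filter, Finset.mem_univ, true_and]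
    rw [heq2]
    exact hQgen q
  · push_neg at hk3
    have hk4 : 4 ≤ k := hk3
    set S' := Finset.univ.filter (fun j : Fin n => (ω j).val ≤ k - 1) with hS'
    have hmS' : ∀ j, j ∈ S' ↔ (ω j).val ≤ k - 1 := by
      intro j; simp [hS']
    have hS'card : S'.card = k := by
      have h1 : S' = Finset.univ.filter (fun j : Fin n => (ω j).val < k) := by
        ext j
        simp only [hS', Finset.mem_filter, Finset.mem_univ, true_and]
        omega
      rw [h1, St3.card_pos_prefix ω k, St3.card_filter_fin_lt k (by omega)]
    have hnogen : ∀ Q' ⊆ S', Q'.card = 4 → ¬ St3.Gen A Q' := by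
      intro Q' hsub h4 hgen
      exact Nat.find_min hex (show k - 1 < k by omega) ⟨Q', by rw [← hS']; exact hsub, h4, hgen⟩
    obtain ⟨p, hp1⟩ := St3.lemL hA S' (by omega) hnogen
    set e := ω.symm ⟨k, hkn⟩ with he
    have hωe : ω e = ⟨k, hkn⟩ := ω.apply_symm_apply _
    have heS' : e ∉ S' := by
      rw [hmS', hωe]
      simp only [not_le]
      omega
    have hQsub' : Q ⊆ insert e S' := by
      intro j hj
      have := hQsub hj
      simp only [Finset.mem_filter, Finset.mem_univ, true_and] at this
      rw [← hk] at this
      by_cases hjk : (ω j).val = k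
      · have hje : j = e := by
          apply ω.injective
          rw [hωe]
          exact Fin.ext hjk
        exact Finset.mem_insert.mpr (Or.inl hje)
      · exact Finset.mem_insert.mpr (Or.inr ((hmS' j).mpr (by omega)))
    have hsum4 : (Q.filter fun i => incident (A i) p).card
        + (Q.filter fun i => ¬ incident (A i) p).card = 4 := by
      rw [Finset.card_filter_add_card_filter_not, hQ4]
    have hQp2 := hQgen p
    have hQnp2 : 2 ≤ (Q.filter fun i => ¬ incident (A i) p).card := by omega
    have hsubnp : (Q.filter fun i => ¬ incident (A i) p)
        ⊆ insert e (S'.filter fun i => ¬ incident (A i) p) := by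
      intro j hj
      rw [Finset.mem_filter] at hj
      rcases Finset.mem_insert.mp (hQsub' hj.1) with rfl | hjS'
      · exact Finset.mem_insert_self _ _
      · exact Finset.mem_insert_of_mem (Finset.mem_filter.mpr ⟨hjS', hj.2⟩)
    have hXcard : (insert e (S'.filter fun i => ¬ incident (A i) p)).card ≤ 2 :=
      le_trans (Finset.card_insert_le _ _) (by omega)
    have hEq : (Q.filter fun i => ¬ incident (A i) p)
        = insert e (S'.filter fun i => ¬ incident (A i) p) :=
      Finset.eq_of_subset_of_card_le hsubnp (by omega)
    have heQf : e ∈ Q.filter fun i => ¬ incident (A i) p := by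
      rw [hEq]; exact Finset.mem_insert_self _ _
    have heQ : e ∈ Q := (Finset.mem_filter.mp heQf).1
    have henp : ¬ incident (A e) p := (Finset.mem_filter.mp heQf).2
    have hfex : (S'.filter fun i => ¬ incident (A i) p).Nonempty := by
      by_contra hne
      rw [Finset.not_nonempty_iff_eq_empty] at hne
      rw [hne] at hEq
      rw [hEq] at hQnp2
      simp at hQnp2
    obtain ⟨f, hf⟩ := hfex
    have hfset : (S'.filter fun i => ¬ incident (A i) p) = {f} := by
      apply Finset.eq_singleton_iff_unique_mem.mpr
      refine ⟨hf, fun x hx => ?_⟩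
      by_contra hxf
      have hsub2 : ({x, f} : Finset (Fin n)) ⊆ S'.filter fun i => ¬ incident (A i) p := by
        intro u hu
        simp only [Finset.mem_insert, Finset.mem_singleton] at hu
        rcases hu with rfl | rfl
        · exact hx
        · exact hf
      have := Finset.card_le_card hsub2
      rw [Finset.card_pair hxf] at this
      omega
    have hfS' : f ∈ S' := (Finset.mem_filter.mp hf).1
    have hfnp : ¬ incident (A f) p := (Finset.mem_filter.mp hf).2
    have hfQ : f ∈ Q := by
      have hmem : f ∈ Q.filter fun i => ¬ incident (A i) p := by
        rw [hEq, hfset]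
        exact Finset.mem_insert_of_mem (Finset.mem_singleton_self f)
      exact (Finset.mem_filter.mp hmem).1
    have hfe : f ≠ e := fun h => heS' (h ▸ hfS')
    have hQpcard : (Q.filter fun i => incident (A i) p).card = 2 := by
      have : (insert e (S'.filter fun i => ¬ incident (A i) p)).card = 2 := by
        rw [hfset, Finset.card_insert_of_notMem (by simp [Ne.symm hfe]), Finset.card_singleton]
      rw [hEq, this] at hsum4
      omega
    obtain ⟨x, y, hxy, hxyeq⟩ := Finset.card_eq_two.mp hQpcard
    have hxmem : x ∈ Q.filter fun i => incident (A i) p := by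
      rw [hxyeq]; exact Finset.mem_insert_self _ _
    have hymem : y ∈ Q.filter fun i => incident (A i) p := by
      rw [hxyeq]; exact Finset.mem_insert_of_mem (Finset.mem_singleton_self y)
    have hxQ : x ∈ Q := (Finset.mem_filter.mp hxmem).1
    have hyQ : y ∈ Q := (Finset.mem_filter.mp hymem).1
    have hxp : incident (A x) p := (Finset.mem_filter.mp hxmem).2
    have hyp : incident (A y) p := (Finset.mem_filter.mp hymem).2
    have hxe : x ≠ e := fun h => henp (h ▸ hxp)
    have hye : y ≠ e := fun h => henp (h ▸ hyp)
    have hxf : x ≠ f := fun h => hfnp (h ▸ hxp)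
    have hyf : y ≠ f := fun h => hfnp (h ▸ hyp)
    have hxS' : x ∈ S' := by
      rcases Finset.mem_insert.mp (hQsub' hxQ) with h | h
      · exact absurd h hxe
      · exact h
    have hyS' : y ∈ S' := by
      rcases Finset.mem_insert.mp (hQsub' hyQ) with h | h
      · exact absurd h hye
      · exact h
    have hQlist : Q = insert x (insert y (insert f {e})) := by
      have h1 : Q = (Q.filter fun i => incident (A i) p)
          ∪ (Q.filter fun i => ¬ incident (A i) p) :=
        (Finset.filter_union_filter_not_eq _ Q).symm
      rw [h1, hxyeq, hEq, hfset]
      ext j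
      simp only [Finset.mem_union, Finset.mem_insert, Finset.mem_singleton]
      tauto
    obtain ⟨qfe, hfqfe, heqfe⟩ := St3.exists_common (A f) (A e)
    -- positions
    have hxpos : (ω x).val < k + 1 := by have := (hmS' x).mp hxS'; omega
    have hypos : (ω y).val < k + 1 := by have := (hmS' y).mp hyS'; omega
    have hfpos : (ω f).val < k + 1 := by have := (hmS' f).mp hfS'; omega
    have hepos : (ω e).val < k + 1 := by
      rw [hωe]
      exact Nat.lt_succ_self k
    -- the permutation of positions
    have hxyΩ : ω x ≠ ω y := fun h => hxy (ω.injective h)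
    have hxfΩ : ω x ≠ ω f := fun h => hxf (ω.injective h)
    have hxeΩ : ω x ≠ ω e := fun h => hxe (ω.injective h)
    have hyfΩ : ω y ≠ ω f := fun h => hyf (ω.injective h)
    have hyeΩ : ω y ≠ ω e := fun h => hye (ω.injective h)
    have hfeΩ : ω f ≠ ω e := fun h => hfe (ω.injective h)
    set s𝔄 : Finset {u : Fin n // u.val < k + 1} :=
      {⟨ω x, hxpos⟩, ⟨ω y, hypos⟩, ⟨ω f, hfpos⟩, ⟨ω e, hepos⟩} with hsA
    set t𝔅 : Finset {u : Fin n // u.val < k + 1} :=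
      {⟨⟨0, by omega⟩, show (0:ℕ) < k + 1 by omega⟩, ⟨⟨1, by omega⟩, show (1:ℕ) < k + 1 by omega⟩,
        ⟨⟨2, by omega⟩, show (2:ℕ) < k + 1 by omega⟩,
        ⟨⟨3, by omega⟩, show (3:ℕ) < k + 1 by omega⟩} with htB
    have hs4 : s𝔄.card = 4 := by
      rw [hsA]
      rw [Finset.card_insert_of_notMem (by simp [Subtype.ext_iff, hxyΩ, hxfΩ, hxeΩ]),
        Finset.card_insert_of_notMem (by simp [Subtype.ext_iff, hyfΩ, hyeΩ]),
        Finset.card_insert_of_notMem (by simp [Subtype.ext_iff, hfeΩ]),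
        Finset.card_singleton]
    have ht4 : t𝔅.card = 4 := by
      rw [htB]
      rw [Finset.card_insert_of_notMem (by simp [Subtype.ext_iff, Fin.ext_iff]),
        Finset.card_insert_of_notMem (by simp [Subtype.ext_iff, Fin.ext_iff]),
        Finset.card_insert_of_notMem (by simp [Subtype.ext_iff, Fin.ext_iff]),
        Finset.card_singleton]
    have hmem_t : ∀ u : {u : Fin n // u.val < k + 1}, u ∈ t𝔅 ↔ u.val.val < 4 := by
      intro u
      constructor
      · intro hu
        rw [htB] at hu
        simp only [Finset.mem_insert, Finset.mem_singleton] at hu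
        rcases hu with rfl | rfl | rfl | rfl <;> norm_num
      · intro hu
        have h4 : u.val.val = 0 ∨ u.val.val = 1 ∨ u.val.val = 2 ∨ u.val.val = 3 := by omega
        rw [htB]
        simp only [Finset.mem_insert, Finset.mem_singleton]
        rcases h4 with h | h | h | h
        · exact Or.inl (Subtype.ext (Fin.ext h))
        · exact Or.inr (Or.inl (Subtype.ext (Fin.ext h)))
        · exact Or.inr (Or.inr (Or.inl (Subtype.ext (Fin.ext h))))
        · exact Or.inr (Or.inr (Or.inr (Subtype.ext (Fin.ext h))))
    have hmem_s : ∀ u : {u : Fin n // u.val < k + 1},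
        u ∈ s𝔄 ↔ (u.val = ω x ∨ u.val = ω y ∨ u.val = ω f ∨ u.val = ω e) := by
      intro u
      rw [hsA]
      simp only [Finset.mem_insert, Finset.mem_singleton, Subtype.ext_iff]
    obtain ⟨π, hπ⟩ := St3.exists_perm_finset (hs4.trans ht4.symm)
    set σ : Equiv.Perm (Fin n) :=
      π.extendDomain (Equiv.refl {u : Fin n // u.val < k + 1}) with hσ
    have hσ_high : ∀ u : Fin n, ¬ u.val < k + 1 → σ u = u := fun u hu =>
      π.extendDomain_apply_not_subtype _ hu
    have hσ_low : ∀ (u : Fin n) (hu : u.val < k + 1), σ u = (π ⟨u, hu⟩).val := by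
      intro u hu
      exact π.extendDomain_apply_subtype (Equiv.refl {u : Fin n // u.val < k + 1}) hu
    have hF2 : ∀ u : Fin n, (σ u).val < k + 1 ↔ u.val < k + 1 := by
      intro u
      by_cases hu : u.val < k + 1
      · rw [hσ_low u hu]
        exact iff_of_true (π ⟨u, hu⟩).2 hu
      · rw [hσ_high u hu]
    set ω' : Fin n ≃ Fin n := ω.trans σ with hω'def
    have hω' : ∀ j, ω' j = σ (ω j) := fun j => rfl
    have hF1 : ∀ j : Fin n, (ω' j).val < 4 ↔ j ∈ Q := by
      intro j
      rw [hω' j]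
      by_cases hj : (ω j).val < k + 1
      · rw [hσ_low _ hj]
        have h1 : ((π ⟨ω j, hj⟩).val.val < 4) ↔ π ⟨ω j, hj⟩ ∈ t𝔅 := (hmem_t _).symm
        rw [h1, hπ, hmem_s, hQlist]
        simp only [Finset.mem_insert, Finset.mem_singleton]
        constructor
        · rintro (h | h | h | h)
          · exact Or.inl (ω.injective h)
          · exact Or.inr (Or.inl (ω.injective h))
          · exact Or.inr (Or.inr (Or.inl (ω.injective h)))
          · exact Or.inr (Or.inr (Or.inr (ω.injective h)))
        · rintro (rfl | rfl | rfl | rfl)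
          · exact Or.inl rfl
          · exact Or.inr (Or.inl rfl)
          · exact Or.inr (Or.inr (Or.inl rfl))
          · exact Or.inr (Or.inr (Or.inr rfl))
      · rw [hσ_high _ hj]
        constructor
        · intro h; omega
        · intro hjQ
          exfalso
          rcases Finset.mem_insert.mp (hQsub' hjQ) with rfl | hjS'
          · rw [hωe] at hj; omega
          · have := (hmS' _).mp hjS'; omega
    have hGen' : ∀ q : ProjPlane,
        (Finset.univ.filter fun j : Fin n => (ω' j).val < 4 ∧ incident (A j) q).card ≤ 2 := by
      intro q
      have heqf : (Finset.univ.filter fun j : Fin n => (ω' j).val < 4 ∧ incident (A j) q)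
          = Q.filter fun j => incident (A j) q := by
        ext j
        simp only [Finset.mem_filter, Finset.mem_univ, true_and]
        rw [hF1 j]
      rw [heqf]
      exact hQgen q
    refine ⟨ω', ?_, hGen'⟩
    intro i
    by_cases hi4 : i.val < 4
    · exact St3.tau_lt4 ω' hGen' i hi4
    · by_cases hik : i.val ≤ k
      · -- middle positions
        push_neg at hi4
        set z := ω'.symm i with hzdef
        have hzpos : ω' z = i := ω'.apply_symm_apply i
        have hze : z ≠ e := by
          intro hzeq
          have h1 : (ω' e).val < 4 := (hF1 e).mpr heQ
          rw [← hzeq, hzpos] at h1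
          omega
        have hzf : z ≠ f := by
          intro hzeq
          have h1 : (ω' f).val < 4 := (hF1 f).mpr hfQ
          rw [← hzeq, hzpos] at h1
          omega
        have hzk : (ω z).val < k + 1 := by
          have h1 : (σ (ω z)).val < k + 1 := by
            rw [← hω' z, hzpos]; omega
          exact (hF2 (ω z)).mp h1
        have hzS' : z ∈ S' := by
          rw [hmS']
          have hne : (ω z).val ≠ k := by
            intro hzk'
            exact hze (ω.injective ((Fin.ext hzk' : ω z = ⟨k, hkn⟩).trans hωe.symm))
          omega
        have hzp : incident (A z) p := by
          by_contra hzpn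
          have h1 : z ∈ S'.filter (fun i => ¬ incident (A i) p) :=
            Finset.mem_filter.mpr ⟨hzS', hzpn⟩
          rw [hfset] at h1
          exact hzf (Finset.mem_singleton.mp h1)
        have hclass : ∀ j, ω' j < i → incident (A j) p ∨ j = f ∨ j = e := by
          intro j hj
          have hjval : (ω' j).val < i.val := hj
          have hjk : (ω j).val < k + 1 := (hF2 (ω j)).mp (by rw [← hω' j]; omega)
          by_cases hje : j = e
          · exact Or.inr (Or.inr hje)
          · have hjS' : j ∈ S' := by
              rw [hmS']
              have : (ω j).val ≠ k := fun hh =>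
                hje (ω.injective ((Fin.ext hh : ω j = ⟨k, hkn⟩).trans hωe.symm))
              omega
            by_cases hjp : incident (A j) p
            · exact Or.inl hjp
            · have h1 : j ∈ S'.filter (fun i => ¬ incident (A i) p) :=
                Finset.mem_filter.mpr ⟨hjS', hjp⟩
              rw [hfset] at h1
              exact Or.inr (Or.inl (Finset.mem_singleton.mp h1))
        show tauArr A ω' i ≤ 2
        have hsub2 : ((combinatorics A).filter fun P =>
            ω'.symm i ∈ P ∧ 2 ≤ (P.filter fun j => ω' j < i).card)
            ⊆ ({pointSet A p, pointSet A qfe} : Finset (Finset (Fin n))) := by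
          intro P hP
          rw [Finset.mem_filter] at hP
          obtain ⟨hPcomb, hzP, h2c⟩ := hP
          obtain ⟨q, rfl⟩ : ∃ q, P = pointSet A q := by
            simp only [combinatorics, Finset.mem_filter, Finset.mem_univ, true_and] at hPcomb
            exact hPcomb.2
          obtain ⟨j₁, hj₁, j₂, hj₂, hj12⟩ := Finset.one_lt_card.mp
            (lt_of_lt_of_le one_lt_two h2c)
          rw [Finset.mem_filter] at hj₁ hj₂
          have hq1 : incident (A j₁) q := St3.mem_pointSet.mp hj₁.1
          have hq2 : incident (A j₂) q := St3.mem_pointSet.mp hj₂.1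
          have hqz : incident (A z) q := St3.mem_pointSet.mp hzP
          have hzj1 : z ≠ j₁ := by
            rintro rfl
            rw [hzpos] at hj₁
            exact lt_irrefl i hj₁.2
          have hzj2 : z ≠ j₂ := by
            rintro rfl
            rw [hzpos] at hj₂
            exact lt_irrefl i hj₂.2
          have key : q = p ∨ q = qfe := by
            rcases hclass j₁ hj₁.2 with h1 | rfl | rfl
            · rcases hclass j₂ hj₂.2 with h2 | rfl | rfl
              · exact Or.inl (St3.common_unique (hA.ne hj12) h1 h2 hq1 hq2).symm
              · exact Or.inl (St3.common_unique (hA.ne hzj1) hzp h1 hqz hq1).symm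
              · exact Or.inl (St3.common_unique (hA.ne hzj1) hzp h1 hqz hq1).symm
            · rcases hclass j₂ hj₂.2 with h2 | rfl | rfl
              · exact Or.inl (St3.common_unique (hA.ne hzj2) hzp h2 hqz hq2).symm
              · exact absurd rfl hj12
              · exact Or.inr (St3.common_unique (hA.ne hfe) hfqfe heqfe hq1 hq2).symm
            · rcases hclass j₂ hj₂.2 with h2 | rfl | rfl
              · exact Or.inl (St3.common_unique (hA.ne hzj2) hzp h2 hqz hq2).symm
              · exact Or.inr (St3.common_unique (hA.ne hfe) hfqfe heqfe hq2 hq1).symm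
              · exact absurd rfl hj12
          rcases key with rfl | rfl
          · exact Finset.mem_insert_self _ _
          · exact Finset.mem_insert_of_mem (Finset.mem_singleton_self _)
        refine le_trans (Finset.card_le_card hsub2) ?_
        exact le_trans (Finset.card_insert_le _ _) (by simp)
      · -- late positions: same tau as the original order
        push_neg at hik
        have h1 : ω'.symm i = ω.symm i := by
          rw [Equiv.symm_apply_eq]
          have : ω' (ω.symm i) = σ (ω (ω.symm i)) := rfl
          rw [this, ω.apply_symm_apply, hσ_high i (by omega)]
        have h2 : ∀ j, ω' j < i ↔ ω j < i := by
          intro j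
          by_cases hj : (ω j).val < k + 1
          · have ha : (ω' j).val < k + 1 := by rw [hω' j]; exact (hF2 _).mpr hj
            constructor
            · intro _
              exact show (ω j).val < i.val by omega
            · intro _
              exact show (ω' j).val < i.val by omega
          · rw [hω' j, hσ_high _ hj]
        rw [St3.tau_congr ω' ω i h1 h2]
        exact hτ i
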